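/- Let X be a measurable space and f : Xⁿ → ℝ bounded measurable. Then sup over probability measures μ on X of E_{μ⊗n}[f] equals the limit as m → ∞ of sup over x₁,...,x_m ∈ X of the average of f(x_{i(1)},...,x_{i(n)}) over injections i : [n] ↪ [m]. -/

import Mathlib

open MeasureTheory
open Set
open scoped ENNReal

section Stmt13Aux

variable {X : Type*} [MeasurableSpace X]

lemma stmt13_mapA (μ : Measure X) [IsProbabilityMeasure μ]
    {n m : ℕ} (i : Fin n ↪ Fin m) :
    Measure.map (fun x : Fin m → X => fun k => x (i k)) (Measure.pi fun _ : Fin m => μ)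
      = Measure.pi fun _ : Fin n => μ := by
  classical
  have hT : Measurable (fun x : Fin m → X => fun k => x (i k)) :=
    measurable_pi_lambda _ fun k => measurable_pi_apply _
  symm
  apply Measure.pi_eq
  intro s hs
  set s' : Fin m → Set X := fun j => if h : ∃ k, i k = j then s h.choose else univ with hs'def
  have hs'i : ∀ k, s' (i k) = s k := by
    intro k
    have h : ∃ k', i k' = i k := ⟨k, rfl⟩
    have hck : h.choose = k := i.injective h.choose_spec
    simp only [hs'def, dif_pos h]
    exact congrArg s hck
  have hs'n : ∀ j, j ∉ Set.range i → s' j = univ := by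
    intro j hj
    have : ¬ ∃ k, i k = j := by simpa [Set.range] using hj
    simp [hs'def, dif_neg this]
  have hpre : (fun x : Fin m → X => fun k => x (i k)) ⁻¹' (univ.pi s) = univ.pi s' := by
    ext x
    simp only [mem_preimage, mem_pi, mem_univ, true_implies]
    constructor
    · intro hx j
      by_cases hj : j ∈ Set.range i
      · obtain ⟨k, rfl⟩ := hj
        rw [hs'i]; exact hx k
      · rw [hs'n j hj]; trivial
    · intro hx k
      have := hx (i k)
      rwa [hs'i] at this
  rw [Measure.map_apply hT (MeasurableSet.univ_pi hs), hpre, Measure.pi_pi]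
  have h1 : ∏ k : Fin n, μ (s' (i k)) = ∏ j ∈ Finset.univ.image i, μ (s' j) :=
    (Finset.prod_image (g := ⇑i) (f := fun j => μ (s' j)) (s := Finset.univ)
      (fun a _ b _ h => i.injective h)).symm
  have h2 : ∏ j ∈ Finset.univ.image i, μ (s' j) = ∏ j : Fin m, μ (s' j) := by
    refine Finset.prod_subset (Finset.subset_univ _) ?_
    intro j _ hj
    have : j ∉ Set.range i := by
      intro ⟨k, hk⟩
      exact hj (Finset.mem_image.2 ⟨k, Finset.mem_univ _, hk⟩)
    rw [hs'n j this]
    simp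
  rw [← h2, ← h1]
  exact Finset.prod_congr rfl fun k _ => by rw [hs'i]

lemma stmt13_mapB {m : ℕ} (x : Fin m → X)
    (c : Measure (Fin m)) [IsProbabilityMeasure c] (n : ℕ) :
    Measure.map (fun a : Fin n → Fin m => fun k => x (a k)) (Measure.pi fun _ : Fin n => c)
      = Measure.pi fun _ : Fin n => Measure.map x c := by
  have hx : Measurable x := .of_discrete
  haveI : IsProbabilityMeasure (Measure.map x c) := Measure.isProbabilityMeasure_map hx.aemeasurable
  have hT : Measurable (fun a : Fin n → Fin m => fun k => x (a k)) :=
    measurable_pi_lambda _ fun k => hx.comp (measurable_pi_apply _)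
  symm
  apply Measure.pi_eq
  intro s hs
  have hpre : (fun a : Fin n → Fin m => fun k => x (a k)) ⁻¹' (univ.pi s)
      = univ.pi fun k => x ⁻¹' s k := by
    ext a; simp [mem_pi]
  rw [Measure.map_apply hT (MeasurableSet.univ_pi hs), hpre, Measure.pi_pi]
  exact Finset.prod_congr rfl fun k _ => (Measure.map_apply hx (hs k)).symm

lemma stmt13_integrable {α : Type*} [MeasurableSpace α] {P : Measure α} [IsFiniteMeasure P]
    {g : α → ℝ} (hg : Measurable g) {C : ℝ} (h : ∀ a, |g a| ≤ C) : Integrable g P := by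
  refine ⟨hg.aestronglyMeasurable, ?_⟩
  apply HasFiniteIntegral.of_bounded (C := C)
  exact ae_of_all _ fun a => by simpa [Real.norm_eq_abs] using h a

lemma stmt13_abs_integral {α : Type*} [MeasurableSpace α] (P : Measure α)
    [IsProbabilityMeasure P] {g : α → ℝ} (hg : Measurable g) {C : ℝ} (h : ∀ a, |g a| ≤ C) :
    |∫ a, g a ∂P| ≤ C := by
  calc |∫ a, g a ∂P| ≤ ∫ a, |g a| ∂P := by
        simpa [Real.norm_eq_abs] using norm_integral_le_integral_norm (μ := P) g
    _ ≤ ∫ _, C ∂P :=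
        integral_mono ((stmt13_integrable hg h).abs) (integrable_const _) fun a => h a
    _ = C := by simp

/-- The empirical measure attached to `x : Fin m → X` and the value of the
`n`-fold product integral of `f` against it. -/
lemma stmt13_empirical {n m : ℕ} (hm : 0 < m) (x : Fin m → X)
    (f : (Fin n → X) → ℝ) (hf : Measurable f) :
    ∃ ν : Measure X, IsProbabilityMeasure ν ∧
      ∫ y, f y ∂(Measure.pi fun _ : Fin n => ν)
        = (∑ g : Fin n → Fin m, f (fun k => x (g k))) / (m : ℝ) ^ n := by
  classical
  set c : Measure (Fin m) := ((m : ℝ≥0∞))⁻¹ • Measure.count with hc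
  have hmE : (m : ℝ≥0∞) ≠ 0 := by exact_mod_cast hm.ne'
  haveI : IsProbabilityMeasure c := by
    constructor
    rw [hc]
    simp only [Measure.smul_apply, Measure.count_univ, smul_eq_mul, Fintype.card_fin]
    simp only [ENat.card_eq_coe_fintype_card, Fintype.card_fin]
    exact ENNReal.inv_mul_cancel hmE (ENNReal.natCast_ne_top m)
  have hx : Measurable x := .of_discrete
  haveI : IsProbabilityMeasure (Measure.map x c) := Measure.isProbabilityMeasure_map hx.aemeasurable
  refine ⟨Measure.map x c, inferInstance, ?_⟩
  have hT : Measurable (fun a : Fin n → Fin m => fun k => x (a k)) :=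
    measurable_pi_lambda _ fun k => hx.comp (measurable_pi_apply _)
  rw [← stmt13_mapB x c n, integral_map hT.aemeasurable hf.aestronglyMeasurable,
    integral_fintype (Integrable.of_finite)]
  simp only [measureReal_def]
  have hsingle : ∀ g : Fin n → Fin m,
      ((Measure.pi fun _ : Fin n => c) {g}).toReal = ((m : ℝ) ^ n)⁻¹ := by
    intro g
    rw [← Set.univ_pi_singleton g, Measure.pi_pi]
    have : ∀ k : Fin n, c ({g k} : Set (Fin m)) = (m : ℝ≥0∞)⁻¹ := by
      intro k
      rw [hc]
      simp [Measure.count_singleton]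
    simp only [this, Finset.prod_const, Finset.card_univ, Fintype.card_fin]
    rw [← ENNReal.inv_pow, ENNReal.toReal_inv]
    simp
  simp only [hsingle, smul_eq_mul]
  rw [← Finset.mul_sum]
  rw [inv_mul_eq_div]

lemma stmt13_ratio (n : ℕ) :
    Filter.Tendsto (fun m : ℕ => (m : ℝ) ^ n / (m.descFactorial n : ℝ))
      Filter.atTop (nhds 1) := by
  have key : ∀ᶠ m : ℕ in Filter.atTop,
      (∏ k ∈ Finset.range n, (m : ℝ) / ((m : ℝ) - (k : ℝ)))
        = (m : ℝ) ^ n / (m.descFactorial n : ℝ) := by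
    filter_upwards [Filter.eventually_ge_atTop n] with m hm
    have hcast : (m.descFactorial n : ℝ) = ∏ k ∈ Finset.range n, ((m : ℝ) - (k : ℝ)) := by
      rw [Nat.descFactorial_eq_prod_range]
      push_cast [Nat.cast_prod]
      refine Finset.prod_congr rfl fun k hk => ?_
      have : k ≤ m := le_trans (le_of_lt (Finset.mem_range.1 hk)) hm
      rw [Nat.cast_sub this]
    rw [hcast, Finset.prod_div_distrib, Finset.prod_const, Finset.card_range]
  have each : ∀ k ∈ Finset.range n,
      Filter.Tendsto (fun m : ℕ => (m : ℝ) / ((m : ℝ) - (k : ℝ)))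
        Filter.atTop (nhds 1) := by
    intro k _
    have h1 : Filter.Tendsto (fun m : ℕ => (m : ℝ) - (k : ℝ)) Filter.atTop Filter.atTop := by
      simpa [sub_eq_add_neg] using
        Filter.tendsto_atTop_add_const_right Filter.atTop (-(k : ℝ)) tendsto_natCast_atTop_atTop
    have h2 : Filter.Tendsto (fun m : ℕ => (k : ℝ) / ((m : ℝ) - (k : ℝ)))
        Filter.atTop (nhds 0) := Filter.Tendsto.div_atTop tendsto_const_nhds h1
    have h3 := (tendsto_const_nhds : Filter.Tendsto (fun _ : ℕ => (1 : ℝ)) _ (nhds 1)).add h2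
    rw [add_zero] at h3
    refine h3.congr' ?_
    filter_upwards [Filter.eventually_ge_atTop (k + 1)] with m hm
    have hknm : (k : ℝ) < (m : ℝ) := by exact_mod_cast hm
    have hne : (m : ℝ) - (k : ℝ) ≠ 0 := by linarith
    field_simp
    ring
  have hprod := tendsto_finset_prod (Finset.range n) each
  rw [Finset.prod_const_one] at hprod
  exact hprod.congr' key

end Stmt13Aux

/-- For bounded measurable f : Xⁿ → ℝ, the supremum over probability measures μ
of E_{μ⊗n}[f] equals the limit as m → ∞ of the supremum over x₁,...,x_m ∈ X of
the average of f(x_{i(1)},...,x_{i(n)}) over injections i : [n] ↪ [m]. -/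
theorem stmt13 {X : Type*} [MeasurableSpace X] (n : ℕ)
    (f : (Fin n → X) → ℝ) (hf : Measurable f) (C : ℝ) (hbd : ∀ y, |f y| ≤ C) :
    Filter.Tendsto
      (fun m : ℕ => ⨆ x : Fin m → X,
        (∑ i : Fin n ↪ Fin m, f (fun k => x (i k))) / (Fintype.card (Fin n ↪ Fin m)))
      Filter.atTop
      (nhds (⨆ μ : {μ : Measure X // IsProbabilityMeasure μ},
        ∫ y, f y ∂(Measure.pi fun _ : Fin n => (μ : Measure X)))) := by
  classical
  set S : ℝ := ⨆ μ : {μ : Measure X // IsProbabilityMeasure μ},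
      ∫ y, f y ∂(Measure.pi fun _ : Fin n => (μ : Measure X)) with hSdef
  set A : ℕ → ℝ := fun m => ⨆ x : Fin m → X,
      (∑ i : Fin n ↪ Fin m, f (fun k => x (i k))) / (Fintype.card (Fin n ↪ Fin m)) with hAdef
  rcases isEmpty_or_nonempty X with hX | hX
  · -- X empty : both sides are 0
    haveI : IsEmpty {μ : Measure X // IsProbabilityMeasure μ} := by
      constructor
      rintro ⟨μ, hμ⟩
      have h1 : μ univ = 1 := hμ.measure_univ
      rw [Set.univ_eq_empty_iff.2 hX, measure_empty] at h1
      exact zero_ne_one h1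
    have hS0 : S = 0 := Real.iSup_of_isEmpty _
    have hA0 : ∀ m : ℕ, 1 ≤ m → A m = 0 := by
      intro m hm
      haveI : IsEmpty (Fin m → X) := ⟨fun g => IsEmpty.false (g ⟨0, hm⟩)⟩
      exact Real.iSup_of_isEmpty _
    rw [hS0]
    have hev : ∀ᶠ m in Filter.atTop, (0 : ℝ) = A m := by
      filter_upwards [Filter.eventually_ge_atTop 1] with m hm
      exact (hA0 m hm).symm
    exact Filter.Tendsto.congr' hev tendsto_const_nhds
  · -- X nonempty
    have hC0 : 0 ≤ C := le_trans (abs_nonneg _) (hbd fun _ => Classical.arbitrary X)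
    have hSabsμ : ∀ μ : {μ : Measure X // IsProbabilityMeasure μ},
        |∫ y, f y ∂(Measure.pi fun _ : Fin n => (μ : Measure X))| ≤ C := by
      rintro ⟨μ, hμ⟩
      exact stmt13_abs_integral _ hf hbd
    have hSbdd : BddAbove (Set.range fun μ : {μ : Measure X // IsProbabilityMeasure μ} =>
        ∫ y, f y ∂(Measure.pi fun _ : Fin n => (μ : Measure X))) := by
      refine ⟨C, ?_⟩
      rintro _ ⟨μ, rfl⟩
      exact (abs_le.1 (hSabsμ μ)).2
    haveI hne : Nonempty {μ : Measure X // IsProbabilityMeasure μ} :=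
      ⟨⟨Measure.dirac (Classical.arbitrary X), inferInstance⟩⟩
    have hSle : S ≤ C := ciSup_le fun μ => (abs_le.1 (hSabsμ μ)).2
    have hSge : -C ≤ S :=
      le_ciSup_of_le hSbdd (Classical.arbitrary _) (abs_le.1 (hSabsμ _)).1
    have hSabs : |S| ≤ C := abs_le.2 ⟨hSge, hSle⟩
    -- lower bound : S ≤ A m for n ≤ m
    have hlow : ∀ m : ℕ, n ≤ m → S ≤ A m := by
      intro m hnm
      have hKpos : 0 < Fintype.card (Fin n ↪ Fin m) := by
        rw [Fintype.card_embedding_eq]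
        simp only [Fintype.card_fin]
        refine Nat.pos_of_ne_zero fun h0 => ?_
        exact absurd (Nat.descFactorial_eq_zero_iff_lt.1 h0) (not_lt.2 hnm)
      have hKR : (0 : ℝ) < (Fintype.card (Fin n ↪ Fin m) : ℝ) := by exact_mod_cast hKpos
      have hgb : ∀ x : Fin m → X,
          |(∑ i : Fin n ↪ Fin m, f (fun k => x (i k))) / (Fintype.card (Fin n ↪ Fin m) : ℝ)|
            ≤ C := by
        intro x
        rw [abs_div, abs_of_pos hKR, div_le_iff₀ hKR]
        calc |∑ i : Fin n ↪ Fin m, f (fun k => x (i k))|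
            ≤ ∑ i : Fin n ↪ Fin m, |f (fun k => x (i k))| :=
              Finset.abs_sum_le_sum_abs _ _
          _ ≤ (Finset.univ : Finset (Fin n ↪ Fin m)).card • C :=
              Finset.sum_le_card_nsmul _ _ C (fun i _ => hbd _)
          _ = C * (Fintype.card (Fin n ↪ Fin m) : ℝ) := by
              rw [nsmul_eq_mul, Finset.card_univ, mul_comm]
      have hAbdd : BddAbove (Set.range fun x : Fin m → X =>
          (∑ i : Fin n ↪ Fin m, f (fun k => x (i k))) / (Fintype.card (Fin n ↪ Fin m) : ℝ)) := by
        refine ⟨C, ?_⟩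
        rintro _ ⟨x, rfl⟩
        exact (abs_le.1 (hgb x)).2
      refine ciSup_le fun μp => ?_
      obtain ⟨μ, hμ⟩ := μp
      haveI : IsProbabilityMeasure μ := hμ
      have hcomp : ∀ i : Fin n ↪ Fin m,
          ∫ x, f (fun k => x (i k)) ∂(Measure.pi fun _ : Fin m => μ)
            = ∫ y, f y ∂(Measure.pi fun _ : Fin n => μ) := by
        intro i
        rw [← stmt13_mapA μ i]
        exact (integral_map (measurable_pi_lambda _ fun k =>
          measurable_pi_apply _).aemeasurable hf.aestronglyMeasurable).symm
      have hfi : ∀ i : Fin n ↪ Fin m,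
          Measurable (fun x : Fin m → X => f (fun k => x (i k))) := fun i =>
        hf.comp (measurable_pi_lambda _ fun k => measurable_pi_apply _)
      have hAvg : ∫ x, (∑ i : Fin n ↪ Fin m, f (fun k => x (i k)))
            / (Fintype.card (Fin n ↪ Fin m) : ℝ) ∂(Measure.pi fun _ : Fin m => μ)
          = ∫ y, f y ∂(Measure.pi fun _ : Fin n => μ) := by
        rw [integral_div, integral_finset_sum _
          (fun i _ => stmt13_integrable (hfi i) (fun a => hbd _)),
          Finset.sum_congr rfl (fun i _ => hcomp i),
          Finset.sum_const, Finset.card_univ, nsmul_eq_mul]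
        exact mul_div_cancel_left₀ _ (ne_of_gt hKR)
      have hmeasAvg : Measurable (fun x : Fin m → X =>
          (∑ i : Fin n ↪ Fin m, f (fun k => x (i k))) / (Fintype.card (Fin n ↪ Fin m) : ℝ)) :=
        (Finset.measurable_sum _ (fun i _ => hfi i)).div_const _
      calc ∫ y, f y ∂(Measure.pi fun _ : Fin n => μ)
          = ∫ x, (∑ i : Fin n ↪ Fin m, f (fun k => x (i k)))
              / (Fintype.card (Fin n ↪ Fin m) : ℝ) ∂(Measure.pi fun _ : Fin m => μ) :=
            hAvg.symm
        _ ≤ ∫ _, A m ∂(Measure.pi fun _ : Fin m => μ) :=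
            integral_mono (stmt13_integrable hmeasAvg hgb) (integrable_const _)
              (fun x => le_ciSup hAbdd x)
        _ = A m := by simp
    -- upper bound
    have hub : ∀ m : ℕ, n ≤ m → 1 ≤ m →
        A m ≤ S + 2 * C * ((m : ℝ) ^ n / (m.descFactorial n : ℝ) - 1) := by
      intro m hnm hm1
      have hK : (Fintype.card (Fin n ↪ Fin m) : ℝ) = (m.descFactorial n : ℝ) := by
        rw [Fintype.card_embedding_eq]
        simp
      have hKpos : (0 : ℝ) < (Fintype.card (Fin n ↪ Fin m) : ℝ) := by
        rw [hK]
        have : m.descFactorial n ≠ 0 := fun h0 =>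
          absurd (Nat.descFactorial_eq_zero_iff_lt.1 h0) (not_lt.2 hnm)
        exact_mod_cast Nat.pos_of_ne_zero this
      have hKN : (Fintype.card (Fin n ↪ Fin m) : ℝ) ≤ (m : ℝ) ^ n := by
        rw [hK]
        exact_mod_cast Nat.descFactorial_le_pow m n
      have hNpos : (0 : ℝ) < (m : ℝ) ^ n :=
        pow_pos (by exact_mod_cast hm1 : (0:ℝ) < (m:ℝ)) n
      haveI : Nonempty (Fin m → X) := ⟨fun _ => Classical.arbitrary X⟩
      refine ciSup_le fun x => ?_
      obtain ⟨ν, hν, hint⟩ := stmt13_empirical (by omega : 0 < m) x f hf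
      haveI : IsProbabilityMeasure ν := hν
      have hνS : ∫ y, f y ∂(Measure.pi fun _ : Fin n => ν) ≤ S :=
        le_ciSup hSbdd (⟨ν, hν⟩ : {μ : Measure X // IsProbabilityMeasure μ})
      set U : ℝ := ∑ g : Fin n → Fin m, f (fun k => x (g k)) with hUdef
      have hU : U ≤ (m : ℝ) ^ n * S := by
        rw [hint] at hνS
        calc U = (m : ℝ) ^ n * (U / (m : ℝ) ^ n) := by field_simp
          _ ≤ (m : ℝ) ^ n * S := mul_le_mul_of_nonneg_left hνS hNpos.le
      set p : (Fin n → Fin m) → Prop := fun g => Function.Injective g with hpdef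
      have hsplit : U = (∑ g ∈ Finset.univ.filter p, f (fun k => x (g k)))
          + (∑ g ∈ Finset.univ.filter (fun g => ¬ p g), f (fun k => x (g k))) :=
        (Finset.sum_filter_add_sum_filter_not _ _ _).symm
      have hTsum : ∑ i : Fin n ↪ Fin m, f (fun k => x (i k))
          = ∑ g ∈ Finset.univ.filter p, f (fun k => x (g k)) := by
        have hsub : (∑ g ∈ Finset.univ.filter p, f (fun k => x (g k)))
            = ∑ g : {g : Fin n → Fin m // p g}, f (fun k => x (g.1 k)) :=
          Finset.sum_subtype _ (fun g => by simp) _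
        rw [hsub]
        exact (Fintype.sum_equiv (Equiv.subtypeInjectiveEquivEmbedding (Fin n) (Fin m))
          (fun a => f (fun k => x (a.1 k))) (fun i => f (fun k => x (i k)))
          (fun a => rfl)).symm
      have hcardi : ((Finset.univ.filter p).card : ℝ) = (Fintype.card (Fin n ↪ Fin m) : ℝ) := by
        have h1 : Fintype.card {g : Fin n → Fin m // p g} = (Finset.univ.filter p).card :=
          Fintype.card_subtype p
        have h2 : Fintype.card {g : Fin n → Fin m // p g} = Fintype.card (Fin n ↪ Fin m) :=
          Fintype.card_congr (Equiv.subtypeInjectiveEquivEmbedding (Fin n) (Fin m))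
        rw [← h1, h2]
      have hcardn : ((Finset.univ.filter (fun g => ¬ p g)).card : ℝ)
          = (m : ℝ) ^ n - (Fintype.card (Fin n ↪ Fin m) : ℝ) := by
        have h3 := Finset.card_filter_add_card_filter_not
          (s := (Finset.univ : Finset (Fin n → Fin m))) (p := p)
        rw [Finset.card_univ, Fintype.card_fun, Fintype.card_fin, Fintype.card_fin] at h3
        have h4 : ((Finset.univ.filter p).card : ℝ)
            + ((Finset.univ.filter (fun g => ¬ p g)).card : ℝ) = (m : ℝ) ^ n := by
          exact_mod_cast congrArg (fun t : ℕ => (t : ℝ)) h3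
        rw [hcardi] at h4
        linarith
      have hW : |∑ g ∈ Finset.univ.filter (fun g => ¬ p g), f (fun k => x (g k))|
          ≤ ((m : ℝ) ^ n - (Fintype.card (Fin n ↪ Fin m) : ℝ)) * C := by
        calc |∑ g ∈ Finset.univ.filter (fun g => ¬ p g), f (fun k => x (g k))|
            ≤ ∑ g ∈ Finset.univ.filter (fun g => ¬ p g), |f (fun k => x (g k))| :=
              Finset.abs_sum_le_sum_abs _ _
          _ ≤ (Finset.univ.filter (fun g => ¬ p g)).card • C :=
              Finset.sum_le_card_nsmul _ _ C (fun g _ => hbd _)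
          _ = ((m : ℝ) ^ n - (Fintype.card (Fin n ↪ Fin m) : ℝ)) * C := by
              rw [nsmul_eq_mul, hcardn]
      rw [hTsum]
      have hkey : ∑ g ∈ Finset.univ.filter p, f (fun k => x (g k))
          ≤ (Fintype.card (Fin n ↪ Fin m) : ℝ) * S
            + 2 * C * ((m : ℝ) ^ n - (Fintype.card (Fin n ↪ Fin m) : ℝ)) := by
        have h5 := (abs_le.1 hW).1
        have h6 := (abs_le.1 hSabs).2
        nlinarith [hU, hKN]
      rw [div_le_iff₀ hKpos]
      have hexp : (S + 2 * C * ((m : ℝ) ^ n / (m.descFactorial n : ℝ) - 1))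
            * (Fintype.card (Fin n ↪ Fin m) : ℝ)
          = (Fintype.card (Fin n ↪ Fin m) : ℝ) * S
            + 2 * C * ((m : ℝ) ^ n - (Fintype.card (Fin n ↪ Fin m) : ℝ)) := by
        have hdnat : m.descFactorial n ≠ 0 := fun h0 =>
          absurd (Nat.descFactorial_eq_zero_iff_lt.1 h0) (not_lt.2 hnm)
        have hne0 : ((m.descFactorial n : ℕ) : ℝ) ≠ 0 := by exact_mod_cast hdnat
        rw [hK]
        field_simp
      rw [hexp]
      exact hkey
    -- squeeze
    have h0 : Filter.Tendsto
        (fun m : ℕ => 2 * C * ((m : ℝ) ^ n / (m.descFactorial n : ℝ) - 1))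
        Filter.atTop (nhds 0) := by
      have := (Filter.Tendsto.sub_const (stmt13_ratio n) 1).const_mul (2 * C)
      simpa using this
    have herr : Filter.Tendsto
        (fun m : ℕ => S + 2 * C * ((m : ℝ) ^ n / (m.descFactorial n : ℝ) - 1))
        Filter.atTop (nhds S) := by
      have hc : Filter.Tendsto (fun _ : ℕ => S) Filter.atTop (nhds S) := tendsto_const_nhds
      simpa using hc.add h0
    refine tendsto_of_tendsto_of_tendsto_of_le_of_le' tendsto_const_nhds herr ?_ ?_
    · filter_upwards [Filter.eventually_ge_atTop n] with m hm
      exact hlow m hm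
    · filter_upwards [Filter.eventually_ge_atTop n, Filter.eventually_ge_atTop 1] with m h1 h2
      exact hub m h1 h2
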